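/- Let p > 1 with p ≠ 3/2, ρ ≥ 1, and set q = max{2(p−1), 1}. Then there is a constant C depending only on p such that for all real numbers r, t with 0 < r ≤ t one has: (1/r) ∫_{t−r}^{t+r} (α + 2ρ)^{−p(q+1)+2} dα ≤ C (t + r + 2ρ)^{−2p²+p+2} if 1 < p < 3/2, and (1/r) ∫_{t−r}^{t+r} (α + 2ρ)^{−p(q+1)+2} dα ≤ C (t + r + 2ρ)^{−1} (t − r + 2ρ)^{−(2p−3)} if p > 3/2. -/

import Mathlib

open MeasureTheory Metric Real Set

noncomputable section

/-- Euclidean 3-space. -/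
abbrev E3 : Type := EuclideanSpace ℝ (Fin 3)

/-- surface measure on the unit sphere of `ℝ³` -/
def sphMeasure : Measure (sphere (0 : E3) 1) := (volume : Measure E3).toSphere

/-- surface integral over the unit sphere -/
def sphInt (h : E3 → ℝ) : ℝ := ∫ ξ : sphere (0 : E3) 1, h (ξ : E3) ∂sphMeasure

/-- The Duhamel-type integral operator `L`. -/
def Lop (p : ℝ) (w : E3 → ℝ → ℝ) (x : E3) (t : ℝ) : ℝ :=
  (1 / (4 * π)) * ∫ s in (0:ℝ)..t,
    (t - s) * (1 + s) ^ (-(p - 1)) * sphInt (fun η => w (x + (t - s) • η) s)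

/-- Kirchhoff's solution of the free wave equation with data `(ε f, ε (f + g))`. -/
def kirch (ε : ℝ) (f g : E3 → ℝ) (x : E3) (t : ℝ) : ℝ :=
  ε * (t / (4 * π)) * sphInt (fun ξ => f (x + t • ξ) + g (x + t • ξ)) +
    ε * deriv (fun τ : ℝ => (τ / (4 * π)) * sphInt (fun ξ => f (x + τ • ξ))) t

/-- `γ(p,5) = 2 + 6p - 4p²` -/
def gam5 (p : ℝ) : ℝ := 2 + 6 * p - 4 * p ^ 2

/-- Strauss exponent `p_S(5)` -/
def pS5 : ℝ := (3 + Real.sqrt 17) / 4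

/-- the exponent `q` -/
def qexp (p : ℝ) : ℝ := max (2 * (p - 1)) 1

/-- the exponent `q̄` -/
def qbar (p : ℝ) : ℝ := max 0 (2 * p - 3)

/-- the weight `w(r,t)` -/
def wgt (p ρ r t : ℝ) : ℝ :=
  if p = 3 / 2 then
    ρ⁻¹ * (t + r + 2 * ρ) * (Real.log (2 * (t + r + 2 * ρ) / (t - r + 2 * ρ)))⁻¹
  else
    ρ ^ (-(2 * (p - 1))) * (t + r + 2 * ρ) ^ qexp p * (t - r + 2 * ρ) ^ qbar p

/-- the weighted `L^∞` norm on `ℝ³ × [0,T)` -/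
def wnorm (p ρ T : ℝ) (u : E3 → ℝ → ℝ) : ℝ :=
  sSup {y : ℝ | ∃ x : E3, ∃ t : ℝ, 0 ≤ t ∧ t < T ∧ y = wgt p ρ ‖x‖ t * |u x t|}

/-- the norm `‖u⁰‖₀` -/
def wnorm0 (ρ : ℝ) (u : E3 → ℝ → ℝ) : ℝ :=
  sSup {y : ℝ | ∃ x : E3, ∃ t : ℝ, 0 ≤ t ∧ y = ρ⁻¹ * (t + ‖x‖ + 2 * ρ) * |u x t|}

/-- the quantity `D(T)` -/
def DT (p ρ T : ℝ) : ℝ :=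
  if p < pS5 then ((2 * T + 3 * ρ) / ρ) ^ (gam5 p / 2)
  else if p = pS5 then Real.log ((T + 2 * ρ) / ρ)
  else 1

/-- spherical mean of a function on `ℝ³ × [0,T)` -/
def sphMean (v : E3 → ℝ → ℝ) (r t : ℝ) : ℝ :=
  (1 / (4 * π)) * sphInt (fun ξ => v (r • ξ) t)

/-- the region `R(r,t)` -/
def Rset (r t : ℝ) : Set (ℝ × ℝ) :=
  {q | t - r ≤ q.2 + q.1 ∧ q.2 + q.1 ≤ t + r ∧ q.2 - q.1 ≤ t - r ∧ 0 ≤ q.2}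

/-- `m(p)` -/
def mexp (p : ℝ) : ℕ := if p < 2 then 1 else 2

end

set_option maxHeartbeats 1000000 in
/-- the `α`-integral estimate (2.21): bounds for
`(1/r) ∫_{t-r}^{t+r} (α + 2ρ)^{-p(q+1)+2} dα` in the two regimes of `p`. -/
theorem alpha_integral_estimate (p : ℝ) (hp : 1 < p) (hpne : p ≠ 3 / 2) :
    ∃ C : ℝ, 0 < C ∧
      ∀ ρ : ℝ, 1 ≤ ρ → ∀ r t : ℝ, 0 < r → r ≤ t →
        (p < 3 / 2 →
          (1 / r) * (∫ α in (t - r)..(t + r), (α + 2 * ρ) ^ (-(p * (qexp p + 1)) + 2)) ≤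
            C * (t + r + 2 * ρ) ^ (-2 * p ^ 2 + p + 2)) ∧
        (3 / 2 < p →
          (1 / r) * (∫ α in (t - r)..(t + r), (α + 2 * ρ) ^ (-(p * (qexp p + 1)) + 2)) ≤
            C * (t + r + 2 * ρ) ^ (-1 : ℝ) * (t - r + 2 * ρ) ^ (-(2 * p - 3))) := by
  refine ⟨(2:ℝ) ^ (2*p) + 4 / |3 - 2*p| + 4 / |2*p^2 - p - 3|, by positivity, ?_⟩
  intro ρ hρ r t hr hrt
  set C := (2:ℝ) ^ (2*p) + 4 / |3 - 2*p| + 4 / |2*p^2 - p - 3| with hC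
  set B := t - r + 2*ρ with hBdef
  set A := t + r + 2*ρ with hAdef
  have hB2 : (2:ℝ) ≤ B := by rw [hBdef]; linarith
  have hB0 : (0:ℝ) < B := by linarith
  have hB1 : (1:ℝ) ≤ B := by linarith
  have hABr : A = B + 2*r := by rw [hAdef, hBdef]; ring
  have hBA : B ≤ A := by rw [hABr]; linarith
  have hA0 : (0:ℝ) < A := by linarith
  have hA1 : (1:ℝ) ≤ A := by linarith
  -- exact value of the integral
  have hint : ∀ e : ℝ, e ≠ -1 →
      (∫ α in (t-r)..(t+r), (α + 2*ρ) ^ e) = (A ^ (e+1) - B ^ (e+1)) / (e+1) := by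
    intro e he
    rw [intervalIntegral.integral_comp_add_right (fun x => x ^ e) (2*ρ),
      integral_rpow (Or.inr ⟨he, ?_⟩)]
    · rw [uIcc_of_le (by linarith : t - r + 2*ρ ≤ t + r + 2*ρ), mem_Icc]
      push_neg
      intro h; exfalso; rw [← hBdef] at h; linarith
  -- pointwise sup bound
  have hsup : ∀ e : ℝ, e ≤ 0 →
      (∫ α in (t-r)..(t+r), (α + 2*ρ) ^ e) ≤ 2*r * B ^ e := by
    intro e he
    have hconst : (∫ _ in (t-r)..(t+r), B ^ e) = 2*r * B ^ e := by
      rw [intervalIntegral.integral_const, smul_eq_mul]; ring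
    rw [← hconst]
    apply intervalIntegral.integral_mono_on (by linarith) ?_ intervalIntegrable_const
    · intro x hx
      rw [mem_Icc] at hx
      exact Real.rpow_le_rpow_of_nonpos hB0 (by rw [hBdef]; linarith) he
    · apply ContinuousOn.intervalIntegrable
      apply ContinuousOn.rpow_const (by fun_prop)
      intro x hx
      rw [uIcc_of_le (by linarith : t - r ≤ t + r), mem_Icc] at hx
      exact Or.inl (by intro h; linarith)
  have hC2 : (2:ℝ) ^ (2*p) ≤ C := by
    rw [hC]
    have h1 : (0:ℝ) ≤ 4 / |3 - 2*p| := by positivity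
    have h2 : (0:ℝ) ≤ 4 / |2*p^2 - p - 3| := by positivity
    linarith
  have hinv : 1/r ≤ 4/A → True := fun _ => trivial
  constructor
  · -- case 1 < p < 3/2
    intro hp32
    have hq : qexp p = 1 := by unfold qexp; exact max_eq_right (by linarith)
    have heq : -(p * (qexp p + 1)) + 2 = 2 - 2*p := by rw [hq]; ring
    rw [heq]
    have hexp : 2 - 2*p ≤ -2*p^2 + p + 2 := by nlinarith
    have hAex : A ^ (2 - 2*p) ≤ A ^ (-2*p^2 + p + 2) :=
      Real.rpow_le_rpow_of_exponent_le hA1 hexp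
    by_cases hcase : 2*r ≤ B
    · -- small r : use sup bound
      have h1 := hsup (2 - 2*p) (by linarith)
      have h2 : B ^ (2 - 2*p) ≤ (2:ℝ)^(2*p-2) * A ^ (2 - 2*p) := by
        have hAB2 : A / 2 ≤ B := by rw [hABr]; linarith
        calc B ^ (2-2*p) ≤ (A/2) ^ (2-2*p) :=
              Real.rpow_le_rpow_of_nonpos (by linarith) hAB2 (by linarith)
          _ = A ^ (2-2*p) / 2 ^ (2-2*p) :=
              Real.div_rpow (by linarith) (by norm_num) _
          _ = (2:ℝ)^(2*p-2) * A ^ (2 - 2*p) := by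
              rw [div_eq_mul_inv, ← Real.rpow_neg (by norm_num : (0:ℝ) ≤ 2)]
              rw [show -(2-2*p) = 2*p-2 by ring]; ring
      have h4 : (2:ℝ) * (2:ℝ)^(2*p-2) ≤ C := by
        have h5 : (2:ℝ) * (2:ℝ)^(2*p-2) = 2^(1:ℝ) * 2^(2*p-2) := by
          rw [Real.rpow_one]
        rw [h5, ← Real.rpow_add (by norm_num)]
        calc (2:ℝ) ^ (1 + (2*p-2)) ≤ (2:ℝ)^(2*p) :=
              Real.rpow_le_rpow_of_exponent_le (by norm_num) (by linarith)
          _ ≤ C := hC2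
      calc (1/r) * (∫ α in (t-r)..(t+r), (α + 2*ρ) ^ (2 - 2*p))
          ≤ (1/r) * (2*r * B ^ (2-2*p)) := by
            apply mul_le_mul_of_nonneg_left h1 (by positivity)
        _ = 2 * B ^ (2-2*p) := by field_simp
        _ ≤ 2 * ((2:ℝ)^(2*p-2) * A ^ (2 - 2*p)) := by
            apply mul_le_mul_of_nonneg_left h2 (by norm_num)
        _ = (2 * (2:ℝ)^(2*p-2)) * A ^ (2 - 2*p) := by ring
        _ ≤ C * A ^ (-2*p^2 + p + 2) :=
            mul_le_mul h4 hAex (by positivity) (by positivity)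
    · -- large r : use exact integral
      push_neg at hcase
      have hrA : A ≤ 4*r := by rw [hABr]; linarith
      have h1 := hint (2 - 2*p) (by intro h; apply hpne; linarith)
      rw [show (2 - 2*p + 1 : ℝ) = 3 - 2*p by ring] at h1
      have hs : (0:ℝ) < 3 - 2*p := by linarith
      have hI0 : (0:ℝ) ≤ ∫ α in (t-r)..(t+r), (α + 2*ρ) ^ (2-2*p) := by
        rw [h1]
        have := Real.rpow_le_rpow (le_of_lt hB0) hBA (le_of_lt hs)
        apply div_nonneg (by linarith) (le_of_lt hs)
      have h2 : (∫ α in (t-r)..(t+r), (α + 2*ρ) ^ (2 - 2*p)) ≤ A ^ (3 - 2*p) / (3 - 2*p) := by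
        rw [h1]
        exact (div_le_div_iff_of_pos_right hs).mpr
          (by linarith [Real.rpow_nonneg (le_of_lt hB0) (3-2*p)])
      have hinv : 1/r ≤ 4/A := by
        rw [div_le_div_iff₀ hr hA0]; linarith
      have hAA : A ^ (2-2*p) = A ^ (3-2*p) / A := by
        rw [show (2-2*p : ℝ) = (3-2*p) - 1 by ring, Real.rpow_sub hA0, Real.rpow_one]
      have h6 : 4 / (3-2*p) ≤ C := by
        rw [hC, abs_of_pos hs]
        have h7 : (0:ℝ) < (2:ℝ)^(2*p) := by positivity
        have h8 : (0:ℝ) ≤ 4 / |2*p^2 - p - 3| := by positivity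
        linarith
      calc (1/r) * (∫ α in (t-r)..(t+r), (α + 2*ρ) ^ (2 - 2*p))
          ≤ (4/A) * (A ^ (3-2*p) / (3-2*p)) :=
            mul_le_mul hinv h2 hI0 (by positivity)
        _ = (4/(3-2*p)) * (A ^ (3-2*p) / A) := by ring
        _ = (4/(3-2*p)) * A ^ (2-2*p) := by rw [hAA]
        _ ≤ C * A ^ (-2*p^2 + p + 2) :=
            mul_le_mul h6 hAex (by positivity) (le_trans (by positivity) h6)
  · -- case p > 3/2
    intro hp32
    have hq : qexp p = 2*(p-1) := by unfold qexp; exact max_eq_left (by linarith)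
    have heq : -(p * (qexp p + 1)) + 2 = -2*p^2 + p + 2 := by rw [hq]; ring
    rw [heq]
    have hs : (0:ℝ) < 2*p^2 - p - 3 := by nlinarith
    have habs : |2*p^2 - p - 3| = 2*p^2 - p - 3 := abs_of_pos hs
    by_cases hcase : 2*r ≤ B
    · -- small r : use sup bound
      have h1 := hsup (-2*p^2 + p + 2) (by nlinarith)
      have h2 : B ^ (-2*p^2 + p + 2) ≤ 2 * A ^ (-1:ℝ) * B ^ (-(2*p-3)) := by
        have e1 : B ^ (-2*p^2 + p + 2) = B ^ (-2*p^2 + 3*p - 1) * B ^ (-(2*p-3)) := by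
          rw [← Real.rpow_add hB0]; ring_nf
        rw [e1]
        have e2 : B ^ (-2*p^2 + 3*p - 1) ≤ B ^ (-1:ℝ) :=
          Real.rpow_le_rpow_of_exponent_le hB1 (by nlinarith)
        have e3 : B ^ (-1:ℝ) ≤ 2 * A ^ (-1:ℝ) := by
          rw [Real.rpow_neg_one, Real.rpow_neg_one]
          rw [show (2:ℝ) * A⁻¹ = 2 / A by ring, inv_eq_one_div, div_le_div_iff₀ hB0 hA0]
          rw [hABr]; linarith
        calc B ^ (-2*p^2 + 3*p - 1) * B ^ (-(2*p-3))
            ≤ B ^ (-1:ℝ) * B ^ (-(2*p-3)) := by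
              apply mul_le_mul_of_nonneg_right e2 (by positivity)
          _ ≤ (2 * A ^ (-1:ℝ)) * B ^ (-(2*p-3)) := by
              apply mul_le_mul_of_nonneg_right e3 (by positivity)
      have h4 : (4:ℝ) ≤ C := by
        have : (4:ℝ) = 2 ^ (2:ℝ) := by norm_num
        rw [this]
        exact le_trans (Real.rpow_le_rpow_of_exponent_le (by norm_num) (by linarith)) hC2
      calc (1/r) * (∫ α in (t-r)..(t+r), (α + 2*ρ) ^ (-2*p^2 + p + 2))
          ≤ (1/r) * (2*r * B ^ (-2*p^2 + p + 2)) := by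
            apply mul_le_mul_of_nonneg_left h1 (by positivity)
        _ = 2 * B ^ (-2*p^2 + p + 2) := by field_simp
        _ ≤ 2 * (2 * A ^ (-1:ℝ) * B ^ (-(2*p-3))) := by
            apply mul_le_mul_of_nonneg_left h2 (by norm_num)
        _ = 4 * A ^ (-1:ℝ) * B ^ (-(2*p-3)) := by ring
        _ ≤ C * A ^ (-1:ℝ) * B ^ (-(2*p-3)) := by
            apply mul_le_mul_of_nonneg_right ?_ (by positivity)
            apply mul_le_mul_of_nonneg_right h4 (by positivity)
    · -- large r : use exact integral
      push_neg at hcase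
      have hrA : A ≤ 4*r := by rw [hABr]; linarith
      have h1 := hint (-2*p^2 + p + 2) (by intro h; nlinarith)
      rw [show (-2*p^2 + p + 2 + 1 : ℝ) = -(2*p^2 - p - 3) by ring] at h1
      have hI0 : (0:ℝ) ≤ ∫ α in (t-r)..(t+r), (α + 2*ρ) ^ (-2*p^2 + p + 2) := by
        rw [h1]
        have h3 : A ^ (-(2*p^2 - p - 3)) ≤ B ^ (-(2*p^2 - p - 3)) :=
          Real.rpow_le_rpow_of_nonpos hB0 hBA (by linarith)
        rw [div_nonneg_iff]
        exact Or.inr ⟨by linarith, by linarith⟩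
      have h2 : (∫ α in (t-r)..(t+r), (α + 2*ρ) ^ (-2*p^2 + p + 2))
          ≤ B ^ (-(2*p-3)) / (2*p^2 - p - 3) := by
        rw [h1, div_neg, ← neg_div, neg_sub]
        apply (div_le_div_iff_of_pos_right hs).mpr
        have h4 : (0:ℝ) ≤ A ^ (-(2*p^2-p-3)) := Real.rpow_nonneg (le_of_lt hA0) _
        have hexp2 : (-(2*p^2-p-3) : ℝ) ≤ -(2*p-3) := by
          nlinarith [mul_pos (by linarith : (0:ℝ) < p) (by linarith : (0:ℝ) < 2*p-3)]
        have h5 : B ^ (-(2*p^2-p-3)) ≤ B ^ (-(2*p-3)) :=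
          Real.rpow_le_rpow_of_exponent_le hB1 hexp2
        linarith
      have hinv : 1/r ≤ 4/A := by rw [div_le_div_iff₀ hr hA0]; linarith
      have h6 : 4/(2*p^2 - p - 3) ≤ C := by
        rw [hC, habs]
        have h7 : (0:ℝ) < (2:ℝ)^(2*p) := by positivity
        have h8 : (0:ℝ) ≤ 4 / |3 - 2*p| := by positivity
        linarith
      calc (1/r) * (∫ α in (t-r)..(t+r), (α + 2*ρ) ^ (-2*p^2 + p + 2))
          ≤ (4/A) * (B ^ (-(2*p-3)) / (2*p^2 - p - 3)) :=
            mul_le_mul hinv h2 hI0 (by positivity)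
        _ = (4/(2*p^2 - p - 3)) * A⁻¹ * B ^ (-(2*p-3)) := by ring
        _ = (4/(2*p^2 - p - 3)) * A ^ (-1:ℝ) * B ^ (-(2*p-3)) := by
            rw [Real.rpow_neg_one]
        _ ≤ C * A ^ (-1:ℝ) * B ^ (-(2*p-3)) := by
            apply mul_le_mul_of_nonneg_right ?_ (by positivity)
            exact mul_le_mul_of_nonneg_right h6 (by positivity)
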